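/- Let p be prime, m dividing (p-1)/2 with (p-1)/m even, and H the multiplicative subgroup of (Z/pZ)^× of index m. If H is p^{-1/2}-uniform and p > m⁴ + 5, then H is not sum-free. -/

import Mathlib

-- reindexing sums over ZMod p by range p
lemma aux_sum_zmod (p : ℕ) [NeZero p] (f : ℕ → ℂ) :
    ∑ t : ZMod p, f (ZMod.val t) = ∑ j ∈ Finset.range p, f j := by
  refine Finset.sum_nbij' (fun t => ZMod.val t) (fun j => (j : ZMod p)) ?_ ?_ ?_ ?_ ?_
  · intro a _; exact Finset.mem_range.mpr (ZMod.val_lt a)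
  · intro a _; exact Finset.mem_univ _
  · intro a _; simp [ZMod.natCast_val, ZMod.cast_id]
  · intro a ha; exact ZMod.val_cast_of_lt (Finset.mem_range.mp ha)
  · intro a _; rfl

lemma aux_orth (p : ℕ) [NeZero p] {ζ : ℂ} (hprim : IsPrimitiveRoot ζ p) (k : ℕ) :
    ∑ t : ZMod p, ζ ^ (ZMod.val t * k) = if (k : ZMod p) = 0 then (p : ℂ) else 0 := by
  
  have hζp : ζ ^ p = 1 := hprim.pow_eq_one
  have hre : ∑ t : ZMod p, ζ ^ (ZMod.val t * k) = ∑ j ∈ Finset.range p, (ζ ^ k) ^ j := by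
    rw [aux_sum_zmod p (fun j => ζ ^ (j * k))]
    refine Finset.sum_congr rfl fun j _ => ?_
    rw [← pow_mul, mul_comm]
  rw [hre]
  by_cases hk : (k : ZMod p) = 0
  · have hd : p ∣ k := (ZMod.natCast_eq_zero_iff k p).mp hk
    have h1 : ζ ^ k = 1 := (hprim.pow_eq_one_iff_dvd k).mpr hd
    simp [h1, hk]
  · have hd : ¬ p ∣ k := fun h => hk ((ZMod.natCast_eq_zero_iff k p).mpr h)
    have hne : ζ ^ k ≠ 1 := fun h => hd ((hprim.pow_eq_one_iff_dvd k).mp h)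
    rw [if_neg hk, geom_sum_eq hne]
    rw [← pow_mul, mul_comm, pow_mul, hζp, one_pow]
    simp

set_option maxHeartbeats 1000000 in
theorem stmt_8 (p m : ℕ) (hp : Nat.Prime p) (hm : 0 < m)
    (hdvd : m ∣ (p - 1) / 2) (heven : Even ((p - 1) / m))
    (H : Finset (ZMod p))
    (hH : ∀ x : ZMod p, x ∈ H ↔ ∃ y : ZMod p, y ≠ 0 ∧ y ^ m = x)
    (huniform : ∀ t : ZMod p, t ≠ 0 →
      ‖∑ x ∈ H, Complex.exp (-2 * Real.pi * Complex.I * (t.val * x.val) / p)‖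
        ≤ (p : ℝ) ^ (-(1 : ℝ) / 2) * p)
    (hbig : p > m ^ 4 + 5) :
    ∃ x ∈ H, ∃ y ∈ H, ∃ z ∈ H, x + y = z := by
  by_contra hcon
  push_neg at hcon
  haveI : Fact p.Prime := ⟨hp⟩
  haveI : NeZero p := ⟨hp.pos.ne'⟩
  have hp1 : 1 ≤ p := hp.one_le
  have hp7 : 7 ≤ p := by
    have h1 : 1 ≤ m ^ 4 := Nat.one_le_pow _ _ hm
    omega
  have hp0R : (0:ℝ) < p := by positivity
  set ζ : ℂ := Complex.exp (-2 * Real.pi * Complex.I / p) with hζdef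
  have hprim : IsPrimitiveRoot ζ p := by
    have h := (Complex.isPrimitiveRoot_exp p hp.pos.ne').inv
    rw [hζdef, show -2 * (Real.pi:ℂ) * Complex.I / p = -(2 * Real.pi * Complex.I / p) by ring,
      Complex.exp_neg]
    exact h
  have hζp : ζ ^ p = 1 := hprim.pow_eq_one
  have hζinv : ζ⁻¹ = ζ ^ (p - 1) := by
    refine (eq_inv_of_mul_eq_one_left ?_).symm
    rw [← pow_succ, Nat.sub_add_cancel hp1, hζp]
  have hconj : ∀ n : ℕ, (starRingEnd ℂ) (ζ ^ n) = ζ ^ ((p - 1) * n) := by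
    intro n
    have hcz : (starRingEnd ℂ) ζ = ζ⁻¹ := by
      rw [hζdef, ← Complex.exp_conj, ← Complex.exp_neg]
      congr 1
      simp only [map_div₀, map_mul, map_neg, Complex.conj_I, Complex.conj_ofReal, map_ofNat,
        map_natCast]
      ring
    rw [map_pow, hcz, hζinv, ← pow_mul]
  set χ : ZMod p → ℂ := fun t => ∑ x ∈ H, ζ ^ (ZMod.val t * ZMod.val x) with hχ
  have hζpow : ∀ n : ℕ, ζ ^ n = Complex.exp (-2 * Real.pi * Complex.I * n / p) := by
    intro n
    rw [hζdef, ← Complex.exp_nat_mul]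
    congr 1
    ring
  have hcond3 : ∀ x y z : ZMod p,
      (((ZMod.val x + ZMod.val y + (p - 1) * ZMod.val z : ℕ)) : ZMod p) = 0 ↔ x + y = z := by
    intro x y z
    push_cast [Nat.cast_sub hp1, ZMod.natCast_val, ZMod.cast_id, ZMod.natCast_self]
    rw [show x + y + ((0:ZMod p) - 1) * z = (x + y) - z by ring, sub_eq_zero]
  have hcond2 : ∀ x z : ZMod p,
      (((ZMod.val x + (p - 1) * ZMod.val z : ℕ)) : ZMod p) = 0 ↔ x = z := by
    intro x z
    push_cast [Nat.cast_sub hp1, ZMod.natCast_val, ZMod.cast_id, ZMod.natCast_self]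
    rw [show x + ((0:ZMod p) - 1) * z = x - z by ring, sub_eq_zero]
  have expand3 : ∀ t : ZMod p, χ t * χ t * (starRingEnd ℂ) (χ t)
      = ∑ x ∈ H, ∑ y ∈ H, ∑ z ∈ H,
          ζ ^ (ZMod.val t * (ZMod.val x + ZMod.val y + (p - 1) * ZMod.val z)) := by
    intro t
    simp only [hχ, map_sum, hconj]
    rw [Finset.sum_mul_sum, Finset.sum_mul]
    refine Finset.sum_congr rfl fun x _ => ?_
    rw [Finset.sum_mul]
    refine Finset.sum_congr rfl fun y _ => ?_
    rw [Finset.mul_sum]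
    refine Finset.sum_congr rfl fun z _ => ?_
    rw [← pow_add, ← pow_add]
    congr 1
    ring
  have expand2 : ∀ t : ZMod p, χ t * (starRingEnd ℂ) (χ t)
      = ∑ x ∈ H, ∑ z ∈ H, ζ ^ (ZMod.val t * (ZMod.val x + (p - 1) * ZMod.val z)) := by
    intro t
    simp only [hχ, map_sum, hconj]
    rw [Finset.sum_mul]
    refine Finset.sum_congr rfl fun x _ => ?_
    rw [Finset.mul_sum]
    refine Finset.sum_congr rfl fun z _ => ?_
    rw [← pow_add]
    congr 1
    ring
  have hNzero : ∑ t : ZMod p, χ t * χ t * (starRingEnd ℂ) (χ t) = 0 := by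
    calc ∑ t : ZMod p, χ t * χ t * (starRingEnd ℂ) (χ t)
        = ∑ t : ZMod p, ∑ x ∈ H, ∑ y ∈ H, ∑ z ∈ H,
            ζ ^ (ZMod.val t * (ZMod.val x + ZMod.val y + (p - 1) * ZMod.val z)) :=
          Finset.sum_congr rfl fun t _ => expand3 t
      _ = ∑ x ∈ H, ∑ y ∈ H, ∑ z ∈ H, ∑ t : ZMod p,
            ζ ^ (ZMod.val t * (ZMod.val x + ZMod.val y + (p - 1) * ZMod.val z)) := by
          rw [Finset.sum_comm]
          refine Finset.sum_congr rfl fun x _ => ?_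
          rw [Finset.sum_comm]
          refine Finset.sum_congr rfl fun y _ => ?_
          rw [Finset.sum_comm]
      _ = 0 := by
          refine Finset.sum_eq_zero fun x hx => Finset.sum_eq_zero fun y hy =>
            Finset.sum_eq_zero fun z hz => ?_
          rw [aux_orth p hprim, if_neg]
          rw [hcond3]
          exact hcon x hx y hy z hz
  have hPar : ∑ t : ZMod p, χ t * (starRingEnd ℂ) (χ t) = (p : ℂ) * H.card := by
    calc ∑ t : ZMod p, χ t * (starRingEnd ℂ) (χ t)
        = ∑ x ∈ H, ∑ z ∈ H, ∑ t : ZMod p,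
            ζ ^ (ZMod.val t * (ZMod.val x + (p - 1) * ZMod.val z)) := by
          rw [show (∑ t : ZMod p, χ t * (starRingEnd ℂ) (χ t))
              = ∑ t : ZMod p, ∑ x ∈ H, ∑ z ∈ H,
                ζ ^ (ZMod.val t * (ZMod.val x + (p - 1) * ZMod.val z)) from
            Finset.sum_congr rfl fun t _ => expand2 t]
          rw [Finset.sum_comm]
          refine Finset.sum_congr rfl fun x _ => ?_
          rw [Finset.sum_comm]
      _ = ∑ x ∈ H, ∑ z ∈ H, if x = z then (p:ℂ) else 0 := by
          refine Finset.sum_congr rfl fun x _ => Finset.sum_congr rfl fun z _ => ?_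
          rw [aux_orth p hprim]
          simp only [hcond2]
      _ = (p : ℂ) * H.card := by
          have hrow : ∀ x ∈ H, (∑ z ∈ H, if x = z then (p:ℂ) else 0) = (p:ℂ) := by
            intro x hx
            rw [Finset.sum_ite_eq]
            exact if_pos hx
          rw [Finset.sum_congr rfl hrow, Finset.sum_const, nsmul_eq_mul, mul_comm]
  -- χ at 0
  have hχ0 : χ 0 = (H.card : ℂ) := by
    simp only [hχ]
    simp [ZMod.val_zero]
  -- rpow simplification
  have hs0 : 0 ≤ Real.sqrt p := Real.sqrt_nonneg _
  have hs2 : Real.sqrt p ^ 2 = (p:ℝ) := Real.sq_sqrt hp0R.le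
  have hsqrt : (p:ℝ) ^ (-(1:ℝ)/2) * p = Real.sqrt p := by
    have h1 : (p:ℝ) ^ (-(1:ℝ)/2) = (Real.sqrt p)⁻¹ := by
      rw [neg_div, Real.rpow_neg hp0R.le, Real.sqrt_eq_rpow]
    have hsp : 0 < Real.sqrt p := Real.sqrt_pos.mpr hp0R
    rw [h1]
    field_simp
    exact hs2.symm
  have hbound : ∀ t : ZMod p, t ≠ 0 → ‖χ t‖ ≤ Real.sqrt p := by
    intro t ht
    have h := huniform t ht
    rw [hsqrt] at h
    have heq : χ t = ∑ x ∈ H,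
        Complex.exp (-2 * Real.pi * Complex.I * ((ZMod.val t : ℂ) * (ZMod.val x : ℂ)) / p) := by
      simp only [hχ]
      refine Finset.sum_congr rfl fun x _ => ?_
      rw [hζpow]
      congr 1
      push_cast
      ring
    rw [heq]
    exact h
  -- real Parseval
  have hParC : ∑ t : ZMod p, χ t * (starRingEnd ℂ) (χ t)
      = ((∑ t : ZMod p, ‖χ t‖ ^ 2 : ℝ) : ℂ) := by
    push_cast
    refine Finset.sum_congr rfl fun t _ => ?_
    rw [Complex.mul_conj]
    norm_cast
    exact (Complex.sq_norm _).symm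
  have hParR : (∑ t : ZMod p, ‖χ t‖ ^ 2) = (p:ℝ) * H.card := by
    have h2 : ((∑ t : ZMod p, ‖χ t‖ ^ 2 : ℝ) : ℂ) = ((p:ℝ) * H.card : ℝ) := by
      rw [← hParC, hPar]
      push_cast
      ring
    exact_mod_cast h2
  -- abs of triple product
  have habs3 : ∀ t : ZMod p, ‖χ t * χ t * (starRingEnd ℂ) (χ t)‖
      = ‖χ t‖ ^ 3 := by
    intro t
    rw [norm_mul, norm_mul, Complex.norm_conj]
    ring
  have hsplit : χ 0 * χ 0 * (starRingEnd ℂ) (χ 0)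
      = - ∑ t ∈ Finset.univ.erase (0 : ZMod p), χ t * χ t * (starRingEnd ℂ) (χ t) := by
    have h := Finset.add_sum_erase Finset.univ
      (fun t : ZMod p => χ t * χ t * (starRingEnd ℂ) (χ t)) (Finset.mem_univ 0)
    rw [hNzero] at h
    exact eq_neg_of_add_eq_zero_left h
  have key : (H.card:ℝ)^3 ≤ Real.sqrt p * ((p:ℝ) * H.card) := by
    have h1 : (H.card:ℝ)^3 = ‖χ 0 * χ 0 * (starRingEnd ℂ) (χ 0)‖ := by
      rw [habs3 0, hχ0]
      simp
    calc (H.card:ℝ)^3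
        = ‖∑ t ∈ Finset.univ.erase (0:ZMod p),
            χ t * χ t * (starRingEnd ℂ) (χ t)‖ := by
          rw [h1, hsplit, norm_neg]
      _ ≤ ∑ t ∈ Finset.univ.erase (0:ZMod p),
            ‖χ t * χ t * (starRingEnd ℂ) (χ t)‖ :=
          norm_sum_le _ _
      _ ≤ ∑ t ∈ Finset.univ.erase (0:ZMod p), Real.sqrt p * ‖χ t‖ ^ 2 := by
          refine Finset.sum_le_sum fun t ht => ?_
          rw [habs3]
          have hb := hbound t (Finset.ne_of_mem_erase ht)
          have h0 := norm_nonneg (χ t)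
          nlinarith
      _ ≤ ∑ t : ZMod p, Real.sqrt p * ‖χ t‖ ^ 2 :=
          Finset.sum_le_sum_of_subset_of_nonneg (Finset.erase_subset _ _)
            (fun t _ _ => by positivity)
      _ = Real.sqrt p * ((p:ℝ) * H.card) := by rw [← Finset.mul_sum, hParR]
  -- cardinality bounds
  have h1H : (1 : ZMod p) ∈ H := (hH 1).mpr ⟨1, one_ne_zero, one_pow m⟩
  have hcard_pos : 0 < H.card := Finset.card_pos.mpr ⟨1, h1H⟩
  classical
  have hfiber : ∀ c : ZMod p, (Finset.univ.filter fun y : ZMod p => y ^ m = c).card ≤ m := by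
    intro c
    have hsub : (Finset.univ.filter fun y : ZMod p => y ^ m = c)
        ⊆ (Polynomial.X ^ m - Polynomial.C c : Polynomial (ZMod p)).roots.toFinset := by
      intro y hy
      simp only [Finset.mem_filter, Finset.mem_univ, true_and] at hy
      rw [Multiset.mem_toFinset, Polynomial.mem_roots (Polynomial.X_pow_sub_C_ne_zero hm c)]
      simp [Polynomial.IsRoot, hy]
    calc (Finset.univ.filter fun y : ZMod p => y ^ m = c).card
        ≤ (Polynomial.X ^ m - Polynomial.C c : Polynomial (ZMod p)).roots.toFinset.card :=
          Finset.card_le_card hsub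
      _ ≤ Multiset.card (Polynomial.X ^ m - Polynomial.C c : Polynomial (ZMod p)).roots :=
          Multiset.toFinset_card_le _
      _ ≤ m := by
          have := Polynomial.card_roots'
            (Polynomial.X ^ m - Polynomial.C c : Polynomial (ZMod p))
          rwa [Polynomial.natDegree_X_pow_sub_C] at this
  have hcover : (Finset.univ.filter fun y : ZMod p => y ≠ 0)
      ⊆ H.biUnion (fun c => Finset.univ.filter fun y : ZMod p => y ^ m = c) := by
    intro y hy
    simp only [Finset.mem_filter, Finset.mem_univ, true_and] at hy
    refine Finset.mem_biUnion.mpr ⟨y ^ m, (hH _).mpr ⟨y, hy, rfl⟩, ?_⟩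
    simp
  have hcard_low : p - 1 ≤ H.card * m := by
    have hfil : (Finset.univ.filter fun y : ZMod p => y ≠ 0).card = p - 1 := by
      rw [Finset.filter_ne', Finset.card_erase_of_mem (Finset.mem_univ 0),
        Finset.card_univ, ZMod.card]
    calc p - 1 = (Finset.univ.filter fun y : ZMod p => y ≠ 0).card := hfil.symm
      _ ≤ (H.biUnion (fun c => Finset.univ.filter fun y : ZMod p => y ^ m = c)).card :=
          Finset.card_le_card hcover
      _ ≤ ∑ c ∈ H, (Finset.univ.filter fun y : ZMod p => y ^ m = c).card :=
          Finset.card_biUnion_le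
      _ ≤ ∑ _c ∈ H, m := Finset.sum_le_sum fun c _ => hfiber c
      _ = H.card * m := by rw [Finset.sum_const, smul_eq_mul]
  -- final arithmetic
  have hhpos : (0:ℝ) < (H.card:ℝ) := by exact_mod_cast hcard_pos
  have hsq : (H.card:ℝ)^2 ≤ Real.sqrt p * p := by nlinarith [key, hhpos]
  have hlow : (p:ℝ) - 1 ≤ (H.card:ℝ) * m := by
    have h2 : ((p - 1 : ℕ) : ℝ) ≤ ((H.card * m : ℕ) : ℝ) := Nat.cast_le.mpr hcard_low
    push_cast [Nat.cast_sub hp1] at h2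
    linarith
  have hm4 : (m:ℝ)^4 ≤ (p:ℝ) - 6 := by
    have h2 : (m:ℝ)^4 + 6 ≤ (p:ℝ) := by exact_mod_cast hbig
    linarith
  have hm1 : (1:ℝ) ≤ (m:ℝ) := by exact_mod_cast hm
  have hpR : (7:ℝ) ≤ (p:ℝ) := by exact_mod_cast hp7
  have e0 : ((p:ℝ)-1)^2 ≤ ((H.card:ℝ) * m)^2 := by nlinarith [hlow, hpR, hhpos, hm1]
  have e1 : ((p:ℝ)-1)^2 ≤ (m:ℝ)^2 * (Real.sqrt p * p) := by
    nlinarith [e0, mul_nonneg (sq_nonneg (m:ℝ)) (sub_nonneg.mpr hsq)]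
  have e2 : (((p:ℝ)-1)^2)^2 ≤ ((m:ℝ)^2 * (Real.sqrt p * p))^2 :=
    pow_le_pow_left₀ (sq_nonneg _) e1 2
  have e3 : ((m:ℝ)^2 * (Real.sqrt p * p))^2 = (m:ℝ)^4 * (p:ℝ)^3 := by
    rw [mul_pow, mul_pow, hs2]
    ring
  have e4 : (m:ℝ)^4 * (p:ℝ)^3 ≤ ((p:ℝ) - 6) * (p:ℝ)^3 :=
    mul_le_mul_of_nonneg_right hm4 (by positivity)
  nlinarith [e2, e3, e4, hpR]
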